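/- For integers n ≥ m ≥ 3, one has (n−m+3)·(h_n − h_{n−m+1}) ≤ m, where h_k = Σ_{j=1}^{k} 1/j is the k-th harmonic number. -/

import Mathlib

/-- h_k is the k-th harmonic number. -/
noncomputable def harm (k : ℕ) : ℝ := ∑ j ∈ Finset.Icc 1 k, (1 : ℝ) / j

theorem stmt_6 (n m : ℕ) (hm : 3 ≤ m) (hnm : m ≤ n) :
    ((n : ℝ) - m + 3) * (harm n - harm (n - m + 1)) ≤ m := by
  set a := n - m + 1 with ha
  have han : a + 1 ≤ n := by omega
  have hcard : n - (a + 1) = m - 2 := by omega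
  have hharm : ∀ k : ℕ, harm k = ∑ j ∈ Finset.Ioc 0 k, (1 : ℝ) / j := by
    intro k
    rw [harm, show Finset.Icc 1 k = Finset.Ioc 0 k from Finset.Icc_add_one_left_eq_Ioc 0 k]
  have hdiff : harm n - harm a = ∑ j ∈ Finset.Ioc a n, (1 : ℝ) / j := by
    have h1 := Finset.sum_Ioc_consecutive (fun j : ℕ => (1 : ℝ) / j)
      (Nat.zero_le a) (le_trans (by omega) han)
    rw [hharm, hharm]
    linarith
  have hcast : ((n : ℝ) - m + 3) = (a : ℝ) + 2 := by
    have : (a : ℝ) = (n : ℝ) - m + 1 := by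
      rw [ha]; push_cast [Nat.cast_sub hnm]; ring
    linarith
  rw [hcast, hdiff, Finset.mul_sum,
    show Finset.Ioc a n = Finset.Icc (a + 1) n from (Finset.Icc_add_one_left_eq_Ioc a n).symm,
    Finset.Icc_eq_cons_Ioc han, Finset.sum_cons]
  have ha0 : (0 : ℝ) ≤ (a : ℝ) := Nat.cast_nonneg a
  have h1 : ((a : ℝ) + 2) * (1 / ((a + 1 : ℕ) : ℝ)) ≤ 2 := by
    push_cast
    rw [mul_one_div, div_le_iff₀ (by positivity)]
    nlinarith
  have h2 : ∑ j ∈ Finset.Ioc (a + 1) n, ((a : ℝ) + 2) * (1 / j) ≤ (m : ℝ) - 2 := by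
    calc ∑ j ∈ Finset.Ioc (a + 1) n, ((a : ℝ) + 2) * (1 / j)
        ≤ ∑ _j ∈ Finset.Ioc (a + 1) n, (1 : ℝ) := by
          apply Finset.sum_le_sum
          intro j hj
          have hj' := Finset.mem_Ioc.mp hj
          have hj2 : a + 2 ≤ j := hj'.1
          have hjpos : (0 : ℝ) < (j : ℝ) := by
            exact_mod_cast (by omega : 0 < j)
          rw [mul_one_div, div_le_one hjpos]
          exact_mod_cast hj2
      _ = (m : ℝ) - 2 := by
          rw [Finset.sum_const, Nat.card_Ioc, hcard, nsmul_eq_mul, mul_one]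
          have : ((m - 2 : ℕ) : ℝ) = (m : ℝ) - 2 := by
            push_cast [Nat.cast_sub (by omega : 2 ≤ m)]; ring
          exact this
  have hm' : (3 : ℝ) ≤ m := by exact_mod_cast hm
  linarith
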